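/- Let 0 < α < 1, λ > 0, and let z be a real number with z > λ^{1/α}. Then the improper integral ∫_0^∞ e^{−zt} E_{α,1}(−λ t^α) dt converges and equals z^{α−1}/(z^α + λ); i.e., the Laplace transform of t ↦ E_{α,1}(−λ t^α) at z is z^{α−1}/(z^α+λ). -/

import Mathlib

open MeasureTheory
open scoped ENNReal

/-- The Mittag-Leffler function `E_{α,β}(x) = ∑_{k=0}^∞ x^k / Γ(αk + β)` for real `x`,
where `1/Γ` is interpreted as its entire extension (Mathlib's `Real.Gamma` vanishes at the
poles, so division yields `0` there). The series converges absolutely for every `x`. -/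
noncomputable def mittagLeffler (α β x : ℝ) : ℝ :=
  ∑' k : ℕ, x ^ k / Real.Gamma (α * k + β)

lemma integrable_tsum_aux {μ : Measure ℝ} {f : ℕ → ℝ → ℝ}
    (hf : ∀ i, AEStronglyMeasurable (f i) μ)
    (hf' : ∑' i, ∫⁻ a, ‖f i a‖₊ ∂μ ≠ ∞) :
    Integrable (fun a => ∑' i, f i a) μ := by
  have hf'' : ∀ i, AEMeasurable (fun x => (‖f i x‖₊ : ENNReal)) μ := fun i => (hf i).enorm
  have hsum : ∀ᵐ a ∂μ, Summable fun n => f n a := by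
    rw [← lintegral_tsum hf''] at hf'
    refine (ae_lt_top' (AEMeasurable.ennreal_tsum hf'') hf').mono fun x hx => ?_
    have h2 := ENNReal.tsum_coe_ne_top_iff_summable_coe.mp hx.ne
    exact Summable.of_norm (by simpa [coe_nnnorm] using h2)
  refine ⟨?_, ?_⟩
  · refine aestronglyMeasurable_of_tendsto_ae Filter.atTop
      (f := fun n => fun a => ∑ i ∈ Finset.range n, f i a) ?_ ?_
    · exact fun n => Finset.aestronglyMeasurable_fun_sum _ fun i _ => hf i
    · filter_upwards [hsum] with a ha using ha.hasSum.tendsto_sum_nat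
  · refine lt_of_le_of_lt ?_ hf'.lt_top
    rw [← lintegral_tsum hf'']
    refine lintegral_mono_ae ?_
    filter_upwards [hsum] with a ha
    have hn : Summable fun i => ‖f i a‖₊ := by
      rw [← NNReal.summable_coe]; simpa [coe_nnnorm] using ha.abs
    have h1 : ‖∑' i, f i a‖₊ ≤ ∑' i, ‖f i a‖₊ := nnnorm_tsum_le hn
    calc (‖∑' i, f i a‖₊ : ENNReal) ≤ ((∑' i, ‖f i a‖₊ : NNReal) : ENNReal) := by
          exact_mod_cast h1
      _ = ∑' i, (‖f i a‖₊ : ENNReal) := ENNReal.coe_tsum hn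

/-- For `0 < α < 1`, `λ > 0` and real `z > λ^{1/α}`, the Laplace transform
`∫_0^∞ e^{-zt} E_{α,1}(-λ t^α) dt` converges and equals `z^{α-1}/(z^α + λ)`. -/
theorem mittagLeffler_laplace_transform (α : ℝ) (hα0 : 0 < α) (hα1 : α < 1)
    (lam : ℝ) (hlam : 0 < lam) (z : ℝ) (hz : lam ^ (1 / α) < z) :
    IntegrableOn (fun t : ℝ => Real.exp (-(z * t)) * mittagLeffler α 1 (-lam * t ^ α))
        (Set.Ioi 0) ∧
      ∫ t in Set.Ioi (0 : ℝ), Real.exp (-(z * t)) * mittagLeffler α 1 (-lam * t ^ α)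
        = z ^ (α - 1) / (z ^ α + lam) := by
  have hz0 : 0 < z := lt_trans (Real.rpow_pos_of_pos hlam _) hz
  have hzα : lam < z ^ α := by
    have h1 : (lam ^ (1 / α)) ^ α < z ^ α :=
      Real.rpow_lt_rpow (Real.rpow_pos_of_pos hlam _).le hz hα0
    rwa [← Real.rpow_mul hlam.le, one_div_mul_cancel hα0.ne',
      Real.rpow_one] at h1
  set F : ℕ → ℝ → ℝ := fun k t =>
    ((-lam) ^ k / Real.Gamma (α * k + 1)) * (t ^ (α * (k : ℝ)) * Real.exp (-(z * t))) with hF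
  have hG : ∀ k : ℕ, 0 < Real.Gamma (α * k + 1) := fun k =>
    Real.Gamma_pos_of_pos (by positivity)
  have hFmeas : ∀ k, AEStronglyMeasurable (F k) (volume.restrict (Set.Ioi 0)) := by
    intro k
    apply Measurable.aestronglyMeasurable
    fun_prop
  have base : ∀ k : ℕ, IntegrableOn (fun t : ℝ => t ^ (α * (k : ℝ)) * Real.exp (-(z * t)))
      (Set.Ioi 0) := by
    intro k
    have h := integrableOn_rpow_mul_exp_neg_mul_rpow (s := α * k) (p := 1) (b := z)
      (lt_of_lt_of_le neg_one_lt_zero (by positivity)) zero_lt_one hz0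
    simpa [Real.rpow_one, neg_mul] using h
  have hint : ∀ k, Integrable (F k) (volume.restrict (Set.Ioi 0)) := fun k =>
    ((base k).const_mul _)
  have hval : ∀ k : ℕ, ∫ t in Set.Ioi (0:ℝ), t ^ (α * (k : ℝ)) * Real.exp (-(z * t))
      = (1 / z) ^ (α * (k : ℝ) + 1) * Real.Gamma (α * k + 1) := by
    intro k
    have h := Real.integral_rpow_mul_exp_neg_mul_Ioi (a := α * k + 1) (by positivity) hz0
    simpa using h
  have hgeom : ∀ (c : ℝ) (k : ℕ), c ^ k * (1 / z) ^ (α * (k : ℝ) + 1)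
      = (c * (1 / z) ^ α) ^ k * (1 / z) := by
    intro c k
    have h1 : (1 / z) ^ (α * (k : ℝ)) = ((1 / z) ^ α) ^ k := by
      rw [Real.rpow_mul (by positivity), Real.rpow_natCast]
    rw [Real.rpow_add (by positivity), Real.rpow_one, h1, mul_pow]
    ring
  have hratio : lam * (1 / z) ^ α < 1 := by
    rw [one_div, Real.inv_rpow hz0.le]
    rw [← div_eq_mul_inv, div_lt_one (Real.rpow_pos_of_pos hz0 α)]
    exact hzα
  have hnorm : ∀ k, ∫ t in Set.Ioi (0:ℝ), ‖F k t‖ = lam ^ k * (1 / z) ^ (α * (k : ℝ) + 1) := by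
    intro k
    have he : ∀ t ∈ Set.Ioi (0:ℝ), ‖F k t‖
        = (lam ^ k / Real.Gamma (α * k + 1)) * (t ^ (α * (k : ℝ)) * Real.exp (-(z * t))) := by
      intro t ht
      rw [hF]
      rw [Real.norm_eq_abs, abs_mul, abs_div, abs_pow, abs_neg, abs_of_pos hlam,
        abs_of_pos (hG k), abs_mul, abs_of_pos (Real.rpow_pos_of_pos ht _),
        abs_of_pos (Real.exp_pos _)]
    rw [setIntegral_congr_fun measurableSet_Ioi he, integral_const_mul, hval k,
      div_mul_eq_mul_div, mul_comm ((1 / z) ^ (α * (k:ℝ) + 1)) (Real.Gamma (α * k + 1)),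
      mul_comm (Real.Gamma (α * k + 1)), ← mul_assoc, mul_div_assoc,
      div_self (hG k).ne', mul_one]
  have hS : Summable (fun k : ℕ => lam ^ k * (1 / z) ^ (α * (k : ℝ) + 1)) := by
    simp_rw [hgeom]
    exact (summable_geometric_of_lt_one (by positivity) hratio).mul_right _
  have hlint : ∑' k : ℕ, ∫⁻ a in Set.Ioi (0:ℝ), ‖F k a‖₊ ≠ ⊤ := by
    have h1 : ∀ k : ℕ, ∫⁻ a in Set.Ioi (0:ℝ), ‖F k a‖₊
        = ENNReal.ofReal (lam ^ k * (1 / z) ^ (α * (k : ℝ) + 1)) := by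
      intro k
      simp only [← enorm_eq_nnnorm]
      rw [← MeasureTheory.ofReal_integral_norm_eq_lintegral_enorm (hint k), hnorm k]
    rw [tsum_congr h1, ← ENNReal.ofReal_tsum_of_nonneg (fun k => by positivity) hS]
    exact ENNReal.ofReal_ne_top
  have hpt : ∀ t ∈ Set.Ioi (0:ℝ),
      Real.exp (-(z * t)) * mittagLeffler α 1 (-lam * t ^ α) = ∑' k, F k t := by
    intro t ht
    rw [mittagLeffler, ← tsum_mul_left]
    refine tsum_congr fun k => ?_
    have h2 : (-lam * t ^ α) ^ k = (-lam) ^ k * t ^ (α * (k : ℝ)) := by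
      rw [mul_pow, Real.rpow_mul (le_of_lt ht), Real.rpow_natCast]
    rw [hF, h2]
    ring
  have hInt : IntegrableOn (fun t => ∑' k, F k t) (Set.Ioi 0) :=
    integrable_tsum_aux hFmeas hlint
  have hae : (fun t : ℝ => Real.exp (-(z * t)) * mittagLeffler α 1 (-lam * t ^ α))
      =ᵐ[volume.restrict (Set.Ioi 0)] fun t => ∑' k, F k t := by
    filter_upwards [ae_restrict_mem measurableSet_Ioi] with t ht using hpt t ht
  refine ⟨hInt.congr hae.symm, ?_⟩
  rw [setIntegral_congr_fun measurableSet_Ioi hpt, MeasureTheory.integral_tsum hFmeas hlint]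
  have hIk : ∀ k : ℕ, ∫ t in Set.Ioi (0:ℝ), F k t = ((-lam) * (1 / z) ^ α) ^ k * (1 / z) := by
    intro k
    rw [hF]
    simp only []
    rw [integral_const_mul, hval k, ← hgeom (-lam) k,
      div_mul_eq_mul_div, mul_comm ((1 / z) ^ (α * (k:ℝ) + 1)) (Real.Gamma (α * k + 1)),
      mul_comm (Real.Gamma (α * k + 1)), ← mul_assoc, mul_div_assoc,
      div_self (hG k).ne', mul_one]
  rw [tsum_congr hIk, tsum_mul_right,
    tsum_geometric_of_norm_lt_one (by
      rw [norm_mul, Real.norm_eq_abs, Real.norm_eq_abs, abs_neg, abs_of_pos hlam,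
        abs_of_pos (Real.rpow_pos_of_pos (by positivity) α)]
      exact hratio)]
  have hzα0 : (0:ℝ) < z ^ α := Real.rpow_pos_of_pos hz0 α
  rw [one_div, Real.inv_rpow hz0.le, Real.rpow_sub hz0, Real.rpow_one]
  have h3 : (0:ℝ) < z ^ α + lam := by positivity
  have h4 : (1:ℝ) - -lam * (z ^ α)⁻¹ = (z ^ α + lam) / z ^ α := by
    field_simp
    ring
  rw [h4, inv_div, div_mul_eq_mul_div, div_eq_mul_inv (z ^ α) z]
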